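/- Let n ≥ 2 be an integer and let A be a nonempty subset of Z_n \ {0} with |A| ≤ 5. Then there exists an ordering (a_1, ..., a_k) of the elements of A such that the partial sums s_j = a_1 + ... + a_j (j = 1, ..., k) are pairwise distinct in Z_n. -/

import Mathlib

/-- The partial sums of the ordering `l` are pairwise distinct. -/
def distinctPartialSums {n : ℕ} (l : List (ZMod n)) : Prop :=
  ∀ i j : ℕ, i < j → j < l.length → (l.take (i + 1)).sum ≠ (l.take (j + 1)).sum

lemma dps1 {n : ℕ} (a : ZMod n) : distinctPartialSums [a] := by
  intro i j hij hj
  simp only [List.length_cons, List.length_nil] at hj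
  omega

lemma dps2 {n : ℕ} (a b : ZMod n) (h1 : b ≠ 0) : distinctPartialSums [a, b] := by
  intro i j hij hj
  simp only [List.length_cons, List.length_nil] at hj
  interval_cases j <;> interval_cases i <;>
    simp only [List.take_succ_cons, List.take_zero, List.sum_cons, List.sum_nil, add_zero] <;>
    intro h <;> exact h1 (by linear_combination -h)

lemma dps3 {n : ℕ} (a b c : ZMod n) (h1 : b ≠ 0) (h2 : c ≠ 0) (h5 : b + c ≠ 0) :
    distinctPartialSums [a, b, c] := by
  intro i j hij hj
  simp only [List.length_cons, List.length_nil] at hj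
  interval_cases j <;> interval_cases i <;>
    simp only [List.take_succ_cons, List.take_zero, List.sum_cons, List.sum_nil, add_zero] <;>
    intro h <;>
    first
      | exact h1 (by linear_combination -h)
      | exact h2 (by linear_combination -h)
      | exact h5 (by linear_combination -h)

lemma dps4 {n : ℕ} (a b c d : ZMod n) (h1 : b ≠ 0) (h2 : c ≠ 0) (h3 : d ≠ 0)
    (h5 : b + c ≠ 0) (h6 : c + d ≠ 0) (h8 : b + c + d ≠ 0) :
    distinctPartialSums [a, b, c, d] := by
  intro i j hij hj
  simp only [List.length_cons, List.length_nil] at hj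
  interval_cases j <;> interval_cases i <;>
    simp only [List.take_succ_cons, List.take_zero, List.sum_cons, List.sum_nil, add_zero] <;>
    intro h <;>
    first
      | exact h1 (by linear_combination -h)
      | exact h2 (by linear_combination -h)
      | exact h3 (by linear_combination -h)
      | exact h5 (by linear_combination -h)
      | exact h6 (by linear_combination -h)
      | exact h8 (by linear_combination -h)

lemma dps5 {n : ℕ} (a b c d e : ZMod n) (h1 : b ≠ 0) (h2 : c ≠ 0) (h3 : d ≠ 0) (h4 : e ≠ 0)
    (h5 : b + c ≠ 0) (h6 : c + d ≠ 0) (h7 : d + e ≠ 0)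
    (h8 : b + c + d ≠ 0) (h9 : c + d + e ≠ 0) (h10 : b + c + d + e ≠ 0) :
    distinctPartialSums [a, b, c, d, e] := by
  intro i j hij hj
  simp only [List.length_cons, List.length_nil] at hj
  interval_cases j <;> interval_cases i <;>
    simp only [List.take_succ_cons, List.take_zero, List.sum_cons, List.sum_nil, add_zero] <;>
    intro h <;>
    first
      | exact h1 (by linear_combination -h)
      | exact h2 (by linear_combination -h)
      | exact h3 (by linear_combination -h)
      | exact h4 (by linear_combination -h)
      | exact h5 (by linear_combination -h)
      | exact h6 (by linear_combination -h)
      | exact h7 (by linear_combination -h)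
      | exact h8 (by linear_combination -h)
      | exact h9 (by linear_combination -h)
      | exact h10 (by linear_combination -h)

/-- Arrange four distinct elements `w,x,y,z` in a row `q,r,s,t` so that no two
adjacent entries sum to zero and `w` is not at either end. -/
lemma interior4 {n : ℕ} (w x y z : ZMod n)
    (hwx : w ≠ x) (hwy : w ≠ y) (hwz : w ≠ z) (hxy : x ≠ y) (hxz : x ≠ z) (hyz : y ≠ z) :
    ∃ q r s t : ZMod n,
      q + r ≠ 0 ∧ r + s ≠ 0 ∧ s + t ≠ 0 ∧ q ≠ w ∧ t ≠ w ∧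
      q + r + s + t = w + x + y + z ∧
      [q, r, s, t].Nodup ∧
      (∀ u : ZMod n, (u = q ∨ u = r ∨ u = s ∨ u = t) ↔ (u = w ∨ u = x ∨ u = y ∨ u = z)) := by
  by_cases h1 : w + x = 0
  · -- order (y, w, z, x)
    refine ⟨y, w, z, x, ?_, ?_, ?_, hwy.symm, hwx.symm, by ring, ?_, fun u => by tauto⟩
    · exact fun h => hxy (by linear_combination h1 - h)
    · exact fun h => hxz (by linear_combination h1 - h)
    · exact fun h => hwz (by linear_combination h1 - h)
    · simp [hwy.symm, hyz, hxy.symm, hwz, hwx, hxz.symm]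
  by_cases h2 : w + y = 0
  · -- order (x, w, z, y)
    refine ⟨x, w, z, y, ?_, ?_, ?_, hwx.symm, hwy.symm, by ring, ?_, fun u => by tauto⟩
    · exact fun h => hxy (by linear_combination h - h2)
    · exact fun h => hyz (by linear_combination h2 - h)
    · exact fun h => hwz (by linear_combination h2 - h)
    · simp [hwx.symm, hxz, hxy, hwz, hwy, hyz.symm]
  by_cases h3 : w + z = 0
  · -- order (x, w, y, z)
    refine ⟨x, w, y, z, ?_, ?_, ?_, hwx.symm, hwz.symm, by ring, ?_, fun u => by tauto⟩
    · exact fun h => hxz (by linear_combination h - h3)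
    · exact fun h => hyz (by linear_combination h - h3)
    · exact fun h => hwy (by linear_combination h3 - h)
    · simp [hwx.symm, hxy, hxz, hwy, hwz, hyz]
  by_cases h4 : x + y = 0
  · -- order (x, w, y, z)
    refine ⟨x, w, y, z, ?_, ?_, ?_, hwx.symm, hwz.symm, by ring, ?_, fun u => by tauto⟩
    · exact fun h => h1 (by linear_combination h)
    · exact fun h => h2 (by linear_combination h)
    · exact fun h => hxz (by linear_combination h4 - h)
    · simp [hwx.symm, hxy, hxz, hwy, hwz, hyz]
  · -- order (z, w, x, y)
    refine ⟨z, w, x, y, ?_, ?_, ?_, hwz.symm, hwy.symm, by ring, ?_, fun u => by tauto⟩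
    · exact fun h => h3 (by linear_combination h)
    · exact fun h => h1 (by linear_combination h)
    · exact fun h => h4 (by linear_combination h)
    · simp [hwz.symm, hxz.symm, hyz.symm, hwx, hwy, hxy]

lemma glue5 {n : ℕ} (p w x y z q r s t : ZMod n)
    (hpw : p ≠ w) (hpx : p ≠ x) (hpy : p ≠ y) (hpz : p ≠ z)
    (hw0 : w ≠ 0) (hx0 : x ≠ 0) (hy0 : y ≠ 0) (hz0 : z ≠ 0)
    (hs : w + x + y + z ≠ 0)
    (hmem : ∀ u : ZMod n, (u = q ∨ u = r ∨ u = s ∨ u = t) ↔ (u = w ∨ u = x ∨ u = y ∨ u = z))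
    (hnd : [q, r, s, t].Nodup)
    (hsum : q + r + s + t = w + x + y + z)
    (hqr : q + r ≠ 0) (hrs : r + s ≠ 0) (hst : s + t ≠ 0)
    (hqm : q ≠ w + x + y + z) (htm : t ≠ w + x + y + z) :
    ∃ l : List (ZMod n), l.Nodup ∧ l.toFinset = ({p, w, x, y, z} : Finset (ZMod n)) ∧
      distinctPartialSums l := by
  have hq0 : q ≠ 0 := by
    rcases (hmem q).mp (Or.inl rfl) with h | h | h | h <;> rw [h] <;> assumption
  have hr0 : r ≠ 0 := by
    rcases (hmem r).mp (Or.inr (Or.inl rfl)) with h | h | h | h <;> rw [h] <;> assumption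
  have hs0 : s ≠ 0 := by
    rcases (hmem s).mp (Or.inr (Or.inr (Or.inl rfl))) with h | h | h | h <;> rw [h] <;> assumption
  have ht0 : t ≠ 0 := by
    rcases (hmem t).mp (Or.inr (Or.inr (Or.inr rfl))) with h | h | h | h <;> rw [h] <;> assumption
  have hpq : p ≠ q := by
    rcases (hmem q).mp (Or.inl rfl) with h | h | h | h <;> rw [h] <;> assumption
  have hpr : p ≠ r := by
    rcases (hmem r).mp (Or.inr (Or.inl rfl)) with h | h | h | h <;> rw [h] <;> assumption
  have hps : p ≠ s := by
    rcases (hmem s).mp (Or.inr (Or.inr (Or.inl rfl))) with h | h | h | h <;> rw [h] <;> assumption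
  have hpt : p ≠ t := by
    rcases (hmem t).mp (Or.inr (Or.inr (Or.inr rfl))) with h | h | h | h <;> rw [h] <;> assumption
  have h8 : q + r + s ≠ 0 := fun h => htm (by linear_combination hsum - h)
  have h9 : r + s + t ≠ 0 := fun h => hqm (by linear_combination hsum - h)
  have h10 : q + r + s + t ≠ 0 := by rw [hsum]; exact hs
  refine ⟨[p, q, r, s, t], ?_, ?_, dps5 p q r s t hq0 hr0 hs0 ht0 hqr hrs hst h8 h9 h10⟩
  · exact List.nodup_cons.mpr ⟨by simp [hpq, hpr, hps, hpt], hnd⟩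
  · ext u
    simp only [List.toFinset_cons, List.toFinset_nil, insert_empty_eq, Finset.mem_insert,
      Finset.mem_singleton]
    exact or_congr Iff.rfl (hmem u)

lemma exists5 {n : ℕ} (p w x y z : ZMod n)
    (hpw : p ≠ w) (hpx : p ≠ x) (hpy : p ≠ y) (hpz : p ≠ z)
    (hwx : w ≠ x) (hwy : w ≠ y) (hwz : w ≠ z) (hxy : x ≠ y) (hxz : x ≠ z) (hyz : y ≠ z)
    (hw0 : w ≠ 0) (hx0 : x ≠ 0) (hy0 : y ≠ 0) (hz0 : z ≠ 0)
    (hs : w + x + y + z ≠ 0) :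
    ∃ l : List (ZMod n), l.Nodup ∧ l.toFinset = ({p, w, x, y, z} : Finset (ZMod n)) ∧
      distinctPartialSums l := by
  by_cases hm1 : w + x + y + z = w
  · obtain ⟨q, r, s, t, hqr, hrs, hst, hq, ht, hsum, hnd, hmem⟩ :=
      interior4 w x y z hwx hwy hwz hxy hxz hyz
    exact glue5 p w x y z q r s t hpw hpx hpy hpz hw0 hx0 hy0 hz0 hs hmem hnd hsum hqr hrs hst
      (by rw [hm1]; exact hq) (by rw [hm1]; exact ht)
  by_cases hm2 : w + x + y + z = x
  · obtain ⟨q, r, s, t, hqr, hrs, hst, hq, ht, hsum, hnd, hmem⟩ :=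
      interior4 x w y z hwx.symm hxy hxz hwy hwz hyz
    exact glue5 p w x y z q r s t hpw hpx hpy hpz hw0 hx0 hy0 hz0 hs
      (fun u => (hmem u).trans (by tauto)) hnd (by rw [hsum]; ring) hqr hrs hst
      (by rw [hm2]; exact hq) (by rw [hm2]; exact ht)
  by_cases hm3 : w + x + y + z = y
  · obtain ⟨q, r, s, t, hqr, hrs, hst, hq, ht, hsum, hnd, hmem⟩ :=
      interior4 y w x z hwy.symm hxy.symm hyz hwx hwz hxz
    exact glue5 p w x y z q r s t hpw hpx hpy hpz hw0 hx0 hy0 hz0 hs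
      (fun u => (hmem u).trans (by tauto)) hnd (by rw [hsum]; ring) hqr hrs hst
      (by rw [hm3]; exact hq) (by rw [hm3]; exact ht)
  by_cases hm4 : w + x + y + z = z
  · obtain ⟨q, r, s, t, hqr, hrs, hst, hq, ht, hsum, hnd, hmem⟩ :=
      interior4 z w x y hwz.symm hxz.symm hyz.symm hwx hwy hxy
    exact glue5 p w x y z q r s t hpw hpx hpy hpz hw0 hx0 hy0 hz0 hs
      (fun u => (hmem u).trans (by tauto)) hnd (by rw [hsum]; ring) hqr hrs hst
      (by rw [hm4]; exact hq) (by rw [hm4]; exact ht)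
  · obtain ⟨q, r, s, t, hqr, hrs, hst, hq, ht, hsum, hnd, hmem⟩ :=
      interior4 w x y z hwx hwy hwz hxy hxz hyz
    have hqm : q ≠ w + x + y + z := by
      rcases (hmem q).mp (Or.inl rfl) with h | h | h | h <;> rw [h]
      exacts [fun hh => hm1 hh.symm, fun hh => hm2 hh.symm, fun hh => hm3 hh.symm,
        fun hh => hm4 hh.symm]
    have htm : t ≠ w + x + y + z := by
      rcases (hmem t).mp (Or.inr (Or.inr (Or.inr rfl))) with h | h | h | h <;> rw [h]
      exacts [fun hh => hm1 hh.symm, fun hh => hm2 hh.symm, fun hh => hm3 hh.symm,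
        fun hh => hm4 hh.symm]
    exact glue5 p w x y z q r s t hpw hpx hpy hpz hw0 hx0 hy0 hz0 hs hmem hnd hsum hqr hrs hst
      hqm htm

lemma exists4 {n : ℕ} (p w x y : ZMod n)
    (hpw : p ≠ w) (hpx : p ≠ x) (hpy : p ≠ y)
    (hwx : w ≠ x) (hwy : w ≠ y) (hxy : x ≠ y)
    (hw0 : w ≠ 0) (hx0 : x ≠ 0) (hy0 : y ≠ 0)
    (hs : w + x + y ≠ 0) :
    ∃ l : List (ZMod n), l.Nodup ∧ l.toFinset = ({p, w, x, y} : Finset (ZMod n)) ∧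
      distinctPartialSums l := by
  by_cases swx : w + x = 0
  · refine ⟨[p, w, y, x], ?_, by ext u; simp; tauto, dps4 p w y x hw0 hy0 hx0 ?_ ?_ ?_⟩
    · simp [hpw, hpx, hpy, hwx, hwy, hxy.symm]
    · exact fun h => hxy (by linear_combination swx - h)
    · exact fun h => hwy (by linear_combination swx - h)
    · exact fun h => hs (by linear_combination h)
  by_cases sxy : x + y = 0
  · refine ⟨[p, x, w, y], ?_, by ext u; simp; tauto, dps4 p x w y hx0 hw0 hy0 ?_ ?_ ?_⟩
    · simp [hpw, hpx, hpy, hwx.symm, hwy, hxy]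
    · exact fun h => hwy (by linear_combination h - sxy)
    · exact fun h => hwx (by linear_combination h - sxy)
    · exact fun h => hs (by linear_combination h)
  · exact ⟨[p, w, x, y], by simp [hpw, hpx, hpy, hwx, hwy, hxy], by ext u; simp,
      dps4 p w x y hw0 hx0 hy0 swx sxy hs⟩

lemma exists3 {n : ℕ} (p w x : ZMod n)
    (hpw : p ≠ w) (hpx : p ≠ x) (hwx : w ≠ x)
    (hw0 : w ≠ 0) (hx0 : x ≠ 0) (hs : w + x ≠ 0) :
    ∃ l : List (ZMod n), l.Nodup ∧ l.toFinset = ({p, w, x} : Finset (ZMod n)) ∧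
      distinctPartialSums l :=
  ⟨[p, w, x], by simp [hpw, hpx, hwx], by ext u; simp, dps3 p w x hw0 hx0 hs⟩

/-- Every nonempty subset of `ZMod n \ {0}` with at most 5 elements can be
ordered so that all partial sums are pairwise distinct. -/
theorem sequenceable_of_card_le_five
    (n : ℕ) (hn : 2 ≤ n) (A : Finset (ZMod n)) (hA : A.Nonempty)
    (h0 : (0 : ZMod n) ∉ A) (hcard : A.card ≤ 5) :
    ∃ l : List (ZMod n), l.Nodup ∧ l.toFinset = A ∧ distinctPartialSums l := by
  have hnd := A.nodup_toList
  have hAF := Finset.toList_toFinset A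
  have hlen : A.toList.length ≤ 5 := by rw [Finset.length_toList]; exact hcard
  have hmem : ∀ x ∈ A.toList, x ≠ 0 := fun x hx h => h0 (h ▸ Finset.mem_toList.mp hx)
  match hL : A.toList with
  | [] =>
      exfalso
      obtain ⟨a, ha⟩ := hA
      have := Finset.mem_toList.mpr ha
      rw [hL] at this
      simp at this
  | [a] =>
      rw [hL] at hAF
      simp only [List.toFinset_cons, List.toFinset_nil, insert_empty_eq] at hAF
      exact ⟨[a], by simp, by simpa using hAF, dps1 a⟩
  | [a, b] =>
      rw [hL] at hnd hAF
      simp only [List.nodup_cons, List.mem_cons, List.not_mem_nil, or_false, not_or,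
        List.nodup_nil, not_false_eq_true, and_true] at hnd
      simp only [List.toFinset_cons, List.toFinset_nil, insert_empty_eq] at hAF
      have hb0 : b ≠ 0 := hmem b (by rw [hL]; simp)
      exact ⟨[a, b], by simp [hnd], by simpa using hAF, dps2 a b hb0⟩
  | [a, b, c] =>
      rw [hL] at hnd hAF
      simp only [List.nodup_cons, List.mem_cons, List.not_mem_nil, or_false, not_or,
        List.nodup_nil, not_false_eq_true, and_true] at hnd
      simp only [List.toFinset_cons, List.toFinset_nil, insert_empty_eq] at hAF
      obtain ⟨⟨hab, hac⟩, hbc⟩ := hnd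
      have ha0 : a ≠ 0 := hmem a (by rw [hL]; simp)
      have hb0 : b ≠ 0 := hmem b (by rw [hL]; simp)
      have hc0 : c ≠ 0 := hmem c (by rw [hL]; simp)
      by_cases sbc : b + c = 0
      · obtain ⟨l, h1, h2, h3⟩ := exists3 b a c (Ne.symm hab) hbc hac ha0 hc0
          (fun h => hab (by linear_combination h - sbc))
        refine ⟨l, h1, ?_, h3⟩
        rw [h2, ← hAF]
        ext u; simp; tauto
      · obtain ⟨l, h1, h2, h3⟩ := exists3 a b c hab hac hbc hb0 hc0 sbc
        exact ⟨l, h1, by rw [h2, hAF], h3⟩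
  | [a, b, c, d] =>
      rw [hL] at hnd hAF
      simp only [List.nodup_cons, List.mem_cons, List.not_mem_nil, or_false, not_or,
        List.nodup_nil, not_false_eq_true, and_true] at hnd
      simp only [List.toFinset_cons, List.toFinset_nil, insert_empty_eq] at hAF
      obtain ⟨⟨hab, hac, had⟩, ⟨hbc, hbd⟩, hcd⟩ := hnd
      have ha0 : a ≠ 0 := hmem a (by rw [hL]; simp)
      have hb0 : b ≠ 0 := hmem b (by rw [hL]; simp)
      have hc0 : c ≠ 0 := hmem c (by rw [hL]; simp)
      have hd0 : d ≠ 0 := hmem d (by rw [hL]; simp)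
      by_cases sbcd : b + c + d = 0
      · obtain ⟨l, h1, h2, h3⟩ := exists4 b a c d (Ne.symm hab) hbc hbd hac had hcd ha0 hc0 hd0
          (fun h => hab (by linear_combination h - sbcd))
        refine ⟨l, h1, ?_, h3⟩
        rw [h2, ← hAF]
        ext u; simp; tauto
      · obtain ⟨l, h1, h2, h3⟩ := exists4 a b c d hab hac had hbc hbd hcd hb0 hc0 hd0 sbcd
        exact ⟨l, h1, by rw [h2, hAF], h3⟩
  | [a, b, c, d, e] =>
      rw [hL] at hnd hAF
      simp only [List.nodup_cons, List.mem_cons, List.not_mem_nil, or_false, not_or,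
        List.nodup_nil, not_false_eq_true, and_true] at hnd
      simp only [List.toFinset_cons, List.toFinset_nil, insert_empty_eq] at hAF
      obtain ⟨⟨hab, hac, had, hae⟩, ⟨hbc, hbd, hbe⟩, ⟨hcd, hce⟩, hde⟩ := hnd
      have ha0 : a ≠ 0 := hmem a (by rw [hL]; simp)
      have hb0 : b ≠ 0 := hmem b (by rw [hL]; simp)
      have hc0 : c ≠ 0 := hmem c (by rw [hL]; simp)
      have hd0 : d ≠ 0 := hmem d (by rw [hL]; simp)
      have he0 : e ≠ 0 := hmem e (by rw [hL]; simp)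
      by_cases sbcde : b + c + d + e = 0
      · obtain ⟨l, h1, h2, h3⟩ := exists5 b a c d e (Ne.symm hab) hbc hbd hbe hac had hae hcd hce hde
          ha0 hc0 hd0 he0 (fun h => hab (by linear_combination h - sbcde))
        refine ⟨l, h1, ?_, h3⟩
        rw [h2, ← hAF]
        ext u; simp; tauto
      · obtain ⟨l, h1, h2, h3⟩ := exists5 a b c d e hab hac had hae hbc hbd hbe hcd hce hde
          hb0 hc0 hd0 he0 sbcde
        exact ⟨l, h1, by rw [h2, hAF], h3⟩
  | a :: b :: c :: d :: e :: f :: rest =>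
      exfalso
      rw [hL] at hlen
      simp only [List.length_cons] at hlen
      omega
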